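/- Let H be a real Hilbert space, let X be a finite-dimensional subspace of H, and let Y be a closed subspace of H with X ∩ Y = {0}. Then there exists a constant γ ∈ [0,1) such that |⟨x,y⟩| ≤ γ‖x‖‖y‖ for all x ∈ X and y ∈ Y. -/

import Mathlib

open scoped RealInnerProductSpace

set_option maxHeartbeats 800000 in
/-- existence of a strengthened Cauchy-Schwarz (CBS) constant.
If `H` is a real Hilbert space, `X` a finite-dimensional subspace and `Y` a
closed subspace with `X ∩ Y = {0}`, then there exists `γ ∈ [0,1)` with
`|⟨x,y⟩| ≤ γ‖x‖‖y‖` for all `x ∈ X`, `y ∈ Y`. -/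
theorem stmt8
    {H : Type*} [NormedAddCommGroup H] [InnerProductSpace ℝ H] [CompleteSpace H]
    (X Y : Submodule ℝ H) [FiniteDimensional ℝ X]
    (hYclosed : IsClosed (Y : Set H))
    (hXY : X ⊓ Y = ⊥) :
    ∃ γ : ℝ, 0 ≤ γ ∧ γ < 1 ∧ ∀ x ∈ X, ∀ y ∈ Y, |⟪x, y⟫| ≤ γ * ‖x‖ * ‖y‖ := by
  haveI : CompleteSpace Y := hYclosed.completeSpace_coe
  set P := Y.orthogonalProjectionOnto with hP
  have hinner : ∀ (x : H), ∀ y ∈ Y, ⟪x, y⟫ = ⟪(P x : H), y⟫ := by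
    intro x y hy
    have h1 : x - (P x : H) ∈ Yᗮ := Submodule.sub_starProjection_mem_orthogonal x
    have h2 : ⟪y, x - (P x : H)⟫ = 0 := h1 y hy
    have h3 : ⟪x - (P x : H), y⟫ = 0 := by rw [real_inner_comm]; exact h2
    have h4 := inner_sub_left (𝕜 := ℝ) x (P x : H) y
    rw [h3] at h4
    linarith [h4]
  have hle : ∀ x : H, ‖(P x : H)‖ ≤ ‖x‖ := fun x => by
    simpa using (P.le_opNorm x).trans
      (mul_le_of_le_one_left (norm_nonneg x) (Submodule.orthogonalProjectionOnto_norm_le Y))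
  by_cases hX : X = ⊥
  · refine ⟨0, le_refl 0, by norm_num, ?_⟩
    intro x hx y hy
    rw [hX, Submodule.mem_bot] at hx
    simp [hx]
  · obtain ⟨v, hvX, hv0⟩ := Submodule.exists_mem_ne_zero_of_ne_bot hX
    have hsne : (Metric.sphere (0 : X) 1).Nonempty := by
      refine ⟨‖v‖⁻¹ • ⟨v, hvX⟩, ?_⟩
      simp [norm_smul, abs_of_nonneg (inv_nonneg.mpr (norm_nonneg v))]
      exact inv_mul_cancel₀ (norm_ne_zero_iff.mpr hv0)
    have hf : Continuous fun x : X => ‖(P (x : H) : H)‖ :=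
      continuous_norm.comp (continuous_subtype_val.comp (P.continuous.comp continuous_subtype_val))
    obtain ⟨x₀, hx₀S, hmax⟩ := (isCompact_sphere (0 : X) 1).exists_isMaxOn hsne hf.continuousOn
    have hx₀norm : ‖(x₀ : H)‖ = 1 := by simpa using hx₀S
    set p : H := (P (x₀ : H) : H) with hpdef
    set γ := ‖p‖ with hγ
    have hγ0 : 0 ≤ γ := norm_nonneg _
    have hγ1 : γ < 1 := by
      rcases lt_or_ge γ 1 with h | h
      · exact h
      · exfalso
        have heq : γ = 1 := le_antisymm (by rw [← hx₀norm]; exact hle _) h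
        have horth : ⟪p, (x₀ : H) - p⟫ = 0 := by
          have h1 : (x₀ : H) - p ∈ Yᗮ := Submodule.sub_starProjection_mem_orthogonal _
          apply h1
          exact (P (x₀ : H)).2
        have hpyth : ‖(x₀ : H)‖ ^ 2 = ‖p‖ ^ 2 + ‖(x₀ : H) - p‖ ^ 2 := by
          have h5 := norm_add_sq_real p ((x₀ : H) - p)
          rw [add_sub_cancel, horth] at h5
          linarith
        have hz : ‖(x₀ : H) - p‖ = 0 := by
          have h6 : ‖(x₀ : H) - p‖ ^ 2 = 0 := by
            rw [hx₀norm, ← hγ, heq] at hpyth; nlinarith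
          nlinarith [norm_nonneg ((x₀ : H) - p)]
        have hxY : (x₀ : H) ∈ Y := by
          have h7 : (x₀ : H) = p := sub_eq_zero.mp (norm_eq_zero.mp hz)
          rw [h7]; exact (P (x₀ : H)).2
        have h8 : (x₀ : H) ∈ X ⊓ Y := ⟨x₀.2, hxY⟩
        rw [hXY, Submodule.mem_bot] at h8
        rw [h8] at hx₀norm; simp at hx₀norm
    refine ⟨γ, hγ0, hγ1, ?_⟩
    intro x hx y hy
    have hPx : ‖(P x : H)‖ ≤ γ * ‖x‖ := by
      by_cases hx0 : x = 0
      · simp [hx0]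
      · have hnx : ‖x‖ ≠ 0 := norm_ne_zero_iff.mpr hx0
        set u : X := ‖x‖⁻¹ • ⟨x, hx⟩ with hu
        have huS : u ∈ Metric.sphere (0 : X) 1 := by
          simp [hu, norm_smul, abs_of_nonneg (inv_nonneg.mpr (norm_nonneg x))]
          exact inv_mul_cancel₀ hnx
        have hmax' : ‖(P ((u : H)) : H)‖ ≤ γ := hmax huS
        have hsc : (P ((u : H)) : H) = ‖x‖⁻¹ • (P x : H) := by
          have h9 : ((u : H)) = ‖x‖⁻¹ • x := rfl
          rw [h9, map_smul]; rfl
        rw [hsc, norm_smul, Real.norm_eq_abs,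
          abs_of_nonneg (inv_nonneg.mpr (norm_nonneg x))] at hmax'
        have h10 := mul_le_mul_of_nonneg_left hmax' (norm_nonneg x)
        rw [← mul_assoc, mul_inv_cancel₀ hnx, one_mul] at h10
        linarith [h10, mul_comm γ ‖x‖]
    calc |⟪x, y⟫| = |⟪(P x : H), y⟫| := by rw [hinner x y hy]
    _ ≤ ‖(P x : H)‖ * ‖y‖ := abs_real_inner_le_norm _ _
    _ ≤ γ * ‖x‖ * ‖y‖ := mul_le_mul_of_nonneg_right hPx (norm_nonneg y)
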